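/- For ε > 0, the Hessian of F_b* at f ∈ ℝ^n equals (1/ε) diag(u ∘ Kv) − (1/ε) P diag(b)^{-1} Pᵀ, where u = e^{f/ε}, K = e^{−C/ε}, v = b/(Kᵀu), and P = diag(u) K diag(v); moreover this Hessian is positive semidefinite. -/

import Mathlib

open Finset Real

noncomputable def entropy {n m : ℕ} (P : Matrix (Fin n) (Fin m) ℝ) : ℝ :=
  -∑ i, ∑ j, P i j * (Real.log (P i j) - 1)

def couplings {n m : ℕ} (a : Fin n → ℝ) (b : Fin m → ℝ) :
    Set (Matrix (Fin n) (Fin m) ℝ) :=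
  {P | (∀ i j, 0 ≤ P i j) ∧ (∀ i, ∑ j, P i j = a i) ∧ (∀ j, ∑ i, P i j = b j)}

noncomputable def dotp {n m : ℕ} (P C : Matrix (Fin n) (Fin m) ℝ) : ℝ :=
  ∑ i, ∑ j, P i j * C i j

noncomputable def W {n m : ℕ} (C : Matrix (Fin n) (Fin m) ℝ) (ε : ℝ)
    (a : Fin n → ℝ) (b : Fin m → ℝ) : ℝ :=
  sInf {v | ∃ P ∈ couplings a b, v = dotp P C - ε * entropy P}

def simplex (n : ℕ) : Set (Fin n → ℝ) := {a | (∀ i, 0 ≤ a i) ∧ ∑ i, a i = 1}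

/-- The Fenchel conjugate of `a ↦ W^ε_C(a,b)` over the simplex. -/
noncomputable def Fstar {n m : ℕ} (C : Matrix (Fin n) (Fin m) ℝ) (ε : ℝ)
    (b : Fin m → ℝ) (f : EuclideanSpace ℝ (Fin n)) : ℝ :=
  sSup {v | ∃ a ∈ simplex n, v = ∑ i, f i * a i - W C ε a b}

/-- The Hessian matrix `(1/ε) diag(u ∘ Kv) − (1/ε) P diag(b)⁻¹ Pᵀ`,
where `u = e^{f/ε}`, `K = e^{−C/ε}`, `v = b/(Kᵀu)`, `P = diag(u) K diag(v)`. -/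
noncomputable def hessFstar {n m : ℕ} (C : Matrix (Fin n) (Fin m) ℝ) (ε : ℝ)
    (b : Fin m → ℝ) (f : EuclideanSpace ℝ (Fin n)) : Matrix (Fin n) (Fin n) ℝ :=
  Matrix.of fun i i' =>
    (if i = i' then
      (1/ε) * (Real.exp (f i / ε) *
        ∑ j, Real.exp (-C i j / ε) *
          (b j / ∑ p, Real.exp (-C p j / ε) * Real.exp (f p / ε)))
     else 0)
    - (1/ε) * ∑ j,
        (Real.exp (f i / ε) * Real.exp (-C i j / ε) *
          (b j / ∑ p, Real.exp (-C p j / ε) * Real.exp (f p / ε))) *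
        (Real.exp (f i' / ε) * Real.exp (-C i' j / ε) *
          (b j / ∑ p, Real.exp (-C p j / ε) * Real.exp (f p / ε))) / b j

namespace Stmt19Aux

lemma gibbs_pt {x y : ℝ} (hx : 0 ≤ x) (hy : 0 < y) :
    x * Real.log y - x * Real.log x ≤ y - x := by
  rcases eq_or_lt_of_le hx with h | h
  · simp [← h]; exact hy.le
  · have h1 : Real.log (y / x) ≤ y / x - 1 := Real.log_le_sub_one_of_pos (by positivity)
    have h2 : Real.log (y / x) = Real.log y - Real.log x := Real.log_div hy.ne' h.ne'
    have h3 : x * Real.log (y / x) ≤ x * (y / x - 1) :=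
      mul_le_mul_of_nonneg_left h1 hx
    rw [h2, mul_sub] at h3
    have h4 : x * (y / x - 1) = y - x := by field_simp
    linarith [h3, h4.le]

noncomputable def Zf {n m : ℕ} (C : Matrix (Fin n) (Fin m) ℝ) (ε : ℝ)
    (f : EuclideanSpace ℝ (Fin n)) (j : Fin m) : ℝ :=
  ∑ p, Real.exp (-C p j / ε) * Real.exp (f p / ε)

lemma Zf_pos {n m : ℕ} (hn : 0 < n) (C : Matrix (Fin n) (Fin m) ℝ) (ε : ℝ)
    (f : EuclideanSpace ℝ (Fin n)) (j : Fin m) : 0 < Zf C ε f j := by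
  have : Nonempty (Fin n) := Fin.pos_iff_nonempty.mp hn
  exact Finset.sum_pos (fun p _ => by positivity) Finset.univ_nonempty

lemma Fstar_eq {n m : ℕ} (hn : 0 < n) (b : Fin m → ℝ)
    (hb : (∀ j, 0 < b j) ∧ ∑ j, b j = 1)
    (C : Matrix (Fin n) (Fin m) ℝ) (ε : ℝ) (hε : 0 < ε)
    (f : EuclideanSpace ℝ (Fin n)) :
    Fstar C ε b f =
      ε * ((-∑ j, b j * (Real.log (b j) - 1)) +
        ∑ j, b j * Real.log (Zf C ε f j)) := by
  have hZ : ∀ j, 0 < Zf C ε f j := Zf_pos hn C ε f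
  set T : ℝ := ε * ((-∑ j, b j * (Real.log (b j) - 1)) +
        ∑ j, b j * Real.log (Zf C ε f j)) with hTdef
  have hT : T = ∑ j, ε * (b j * (1 - Real.log (b j)) + b j * Real.log (Zf C ε f j)) := by
    rw [hTdef, ← Finset.sum_neg_distrib, ← Finset.sum_add_distrib, Finset.mul_sum]
    exact Finset.sum_congr rfl fun j _ => by ring
  -- per-column Gibbs inequality
  have perj : ∀ (P : Matrix (Fin n) (Fin m) ℝ) (j : Fin m), (∀ i, 0 ≤ P i j) →
      (∑ i, P i j = b j) →
      ∑ i, (P i j * f i - P i j * C i j - ε * (P i j * (Real.log (P i j) - 1)))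
        ≤ ε * (b j * (1 - Real.log (b j)) + b j * Real.log (Zf C ε f j)) := by
    intro P j hpos hcol
    set y : Fin n → ℝ := fun i => Real.exp (-C i j / ε) * Real.exp (f i / ε) * b j / Zf C ε f j
      with hy
    have hypos : ∀ i, 0 < y i := fun i => by
      have := hZ j; have := hb.1 j
      exact div_pos (by positivity) (hZ j)
    have hysum : ∑ i, y i = b j := by
      rw [hy]
      rw [← Finset.sum_div, ← Finset.sum_mul]
      rw [show (∑ i, Real.exp (-C i j / ε) * Real.exp (f i / ε)) = Zf C ε f j from rfl]
      exact mul_div_cancel_left₀ (b j) (hZ j).ne'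
    have hlog : ∀ i, Real.log (y i) =
        (f i - C i j) / ε + (Real.log (b j) - Real.log (Zf C ε f j)) := by
      intro i
      rw [hy]
      rw [Real.log_div (mul_pos (mul_pos (Real.exp_pos _) (Real.exp_pos _)) (hb.1 j)).ne' (hZ j).ne',
          Real.log_mul (mul_pos (Real.exp_pos _) (Real.exp_pos _)).ne' (hb.1 j).ne',
          Real.log_mul (Real.exp_pos _).ne' (Real.exp_pos _).ne',
          Real.log_exp, Real.log_exp]
      ring
    have hgibbs : ∑ i, (P i j * Real.log (y i) - P i j * Real.log (P i j)) ≤ 0 := by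
      calc ∑ i, (P i j * Real.log (y i) - P i j * Real.log (P i j))
          ≤ ∑ i, (y i - P i j) :=
            Finset.sum_le_sum fun i _ => gibbs_pt (hpos i) (hypos i)
        _ = 0 := by rw [Finset.sum_sub_distrib, hysum, hcol, sub_self]
    set S1 : ℝ := ∑ i, P i j * (f i - C i j) with hS1
    set S2 : ℝ := ∑ i, P i j * Real.log (P i j) with hS2
    have h1 : ∑ i, (P i j * Real.log (y i) - P i j * Real.log (P i j))
        = S1 / ε + (∑ i, P i j) * (Real.log (b j) - Real.log (Zf C ε f j)) - S2 := by
      rw [hS1, hS2, Finset.sum_div, Finset.sum_mul, ← Finset.sum_add_distrib,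
        ← Finset.sum_sub_distrib]
      refine Finset.sum_congr rfl fun i _ => ?_
      rw [hlog i]; ring
    rw [hcol] at h1
    have h2 : ∑ i, (P i j * f i - P i j * C i j - ε * (P i j * (Real.log (P i j) - 1)))
        = S1 - ε * S2 + ε * (∑ i, P i j) := by
      rw [hS1, hS2, Finset.mul_sum, Finset.mul_sum, ← Finset.sum_sub_distrib,
        ← Finset.sum_add_distrib]
      refine Finset.sum_congr rfl fun i _ => ?_; ring
    rw [hcol] at h2
    rw [h2]
    rw [h1] at hgibbs
    have h3 : ε * (S1 / ε + b j * (Real.log (b j) - Real.log (Zf C ε f j)) - S2) ≤ 0 :=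
      mul_nonpos_of_nonneg_of_nonpos hε.le hgibbs
    have h4 : ε * (S1 / ε) = S1 := by field_simp
    nlinarith [h3, h4]
  -- the key upper bound
  have key : ∀ a ∈ simplex n, ∀ P ∈ couplings a b,
      ∑ i, f i * a i - (dotp P C - ε * entropy P) ≤ T := by
    rintro a ha P ⟨hP0, hProw, hPcol⟩
    have hfa : ∑ i, f i * a i = ∑ i, ∑ j, P i j * f i := by
      refine Finset.sum_congr rfl fun i _ => ?_
      rw [← hProw i, Finset.mul_sum]
      exact Finset.sum_congr rfl fun j _ => mul_comm _ _
    have hLHS : ∑ i, f i * a i - (dotp P C - ε * entropy P)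
        = ∑ j, ∑ i, (P i j * f i - P i j * C i j - ε * (P i j * (Real.log (P i j) - 1))) := by
      rw [show (∑ j, ∑ i, (P i j * f i - P i j * C i j - ε * (P i j * (Real.log (P i j) - 1))))
          = ∑ i, ∑ j, (P i j * f i - P i j * C i j - ε * (P i j * (Real.log (P i j) - 1)))
          from Finset.sum_comm]
      rw [hfa, dotp, entropy, mul_neg, sub_neg_eq_add, Finset.mul_sum, sub_add_eq_sub_sub,
        ← Finset.sum_sub_distrib, ← Finset.sum_sub_distrib]
      refine Finset.sum_congr rfl fun i _ => ?_
      rw [Finset.mul_sum, ← Finset.sum_sub_distrib, ← Finset.sum_sub_distrib]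
    rw [hLHS, hT]
    exact Finset.sum_le_sum fun j _ => perj P j (fun i => hP0 i j) (hPcol j)
  -- the optimal coupling
  set Ps : Matrix (Fin n) (Fin m) ℝ :=
    Matrix.of fun i j => Real.exp (-C i j / ε) * Real.exp (f i / ε) * b j / Zf C ε f j with hPs
  have hPsval : ∀ i j, Ps i j = Real.exp (-C i j / ε) * Real.exp (f i / ε) * b j / Zf C ε f j :=
    fun i j => rfl
  have hPspos : ∀ i j, 0 < Ps i j := fun i j => by
    rw [hPsval]
    exact div_pos (mul_pos (mul_pos (Real.exp_pos _) (Real.exp_pos _)) (hb.1 j)) (hZ j)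
  have hPscol : ∀ j, ∑ i, Ps i j = b j := by
    intro j
    simp only [hPsval]
    rw [← Finset.sum_div, ← Finset.sum_mul]
    rw [show (∑ i, Real.exp (-C i j / ε) * Real.exp (f i / ε)) = Zf C ε f j from rfl]
    exact mul_div_cancel_left₀ (b j) (hZ j).ne'
  set astar : Fin n → ℝ := fun i => ∑ j, Ps i j with hastar
  have hamem : astar ∈ simplex n := by
    constructor
    · exact fun i => Finset.sum_nonneg fun j _ => (hPspos i j).le
    · rw [hastar]
      rw [show (∑ i, ∑ j, Ps i j) = ∑ j, ∑ i, Ps i j from Finset.sum_comm]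
      simp only [hPscol]
      exact hb.2
  have hPmem : Ps ∈ couplings astar b :=
    ⟨fun i j => (hPspos i j).le, fun i => rfl, hPscol⟩
  have hlogP : ∀ i j, Real.log (Ps i j) =
      (f i - C i j) / ε + (Real.log (b j) - Real.log (Zf C ε f j)) := by
    intro i j
    rw [hPsval]
    rw [Real.log_div (mul_pos (mul_pos (Real.exp_pos _) (Real.exp_pos _)) (hb.1 j)).ne' (hZ j).ne',
        Real.log_mul (mul_pos (Real.exp_pos _) (Real.exp_pos _)).ne' (hb.1 j).ne',
        Real.log_mul (Real.exp_pos _).ne' (Real.exp_pos _).ne',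
        Real.log_exp, Real.log_exp]
    ring
  have hval : ∑ i, f i * astar i - (dotp Ps C - ε * entropy Ps) = T := by
    have hfa : ∑ i, f i * astar i = ∑ i, ∑ j, Ps i j * f i := by
      refine Finset.sum_congr rfl fun i _ => ?_
      rw [hastar]
      rw [Finset.mul_sum]
      exact Finset.sum_congr rfl fun j _ => mul_comm _ _
    have hLHS : ∑ i, f i * astar i - (dotp Ps C - ε * entropy Ps)
        = ∑ j, ∑ i, (Ps i j * f i - Ps i j * C i j - ε * (Ps i j * (Real.log (Ps i j) - 1))) := by
      rw [show (∑ j, ∑ i, (Ps i j * f i - Ps i j * C i j - ε * (Ps i j * (Real.log (Ps i j) - 1))))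
          = ∑ i, ∑ j, (Ps i j * f i - Ps i j * C i j - ε * (Ps i j * (Real.log (Ps i j) - 1)))
          from Finset.sum_comm]
      rw [hfa, dotp, entropy, mul_neg, sub_neg_eq_add, Finset.mul_sum, sub_add_eq_sub_sub,
        ← Finset.sum_sub_distrib, ← Finset.sum_sub_distrib]
      refine Finset.sum_congr rfl fun i _ => ?_
      rw [Finset.mul_sum, ← Finset.sum_sub_distrib, ← Finset.sum_sub_distrib]
    rw [hLHS, hT]
    refine Finset.sum_congr rfl fun j _ => ?_
    calc ∑ i, (Ps i j * f i - Ps i j * C i j - ε * (Ps i j * (Real.log (Ps i j) - 1)))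
        = ∑ i, Ps i j * (ε * (1 - Real.log (b j) + Real.log (Zf C ε f j))) := by
          refine Finset.sum_congr rfl fun i _ => ?_
          rw [hlogP i j]
          field_simp
          ring
      _ = (∑ i, Ps i j) * (ε * (1 - Real.log (b j) + Real.log (Zf C ε f j))) := by
          rw [Finset.sum_mul]
      _ = ε * (b j * (1 - Real.log (b j)) + b j * Real.log (Zf C ε f j)) := by
          rw [hPscol j]; ring
  -- assemble
  have hsetne : ∃ v, v ∈ {v | ∃ a ∈ simplex n, v = ∑ i, f i * a i - W C ε a b} :=
    ⟨_, astar, hamem, rfl⟩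
  have upper : ∀ v ∈ {v | ∃ a ∈ simplex n, v = ∑ i, f i * a i - W C ε a b}, v ≤ T := by
    rintro v ⟨a, ha, rfl⟩
    have hWge : ∑ i, f i * a i - T ≤ W C ε a b := by
      apply le_csInf
      · refine ⟨_, ⟨Matrix.of fun i j => a i * b j, ⟨?_, ?_, ?_⟩, rfl⟩⟩
        · exact fun i j => mul_nonneg (ha.1 i) (hb.1 j).le
        · intro i; rw [show (∑ j, (Matrix.of fun i j => a i * b j) i j) = ∑ j, a i * b j from rfl,
            ← Finset.mul_sum, hb.2, mul_one]
        · intro j; rw [show (∑ i, (Matrix.of fun i j => a i * b j) i j) = ∑ i, a i * b j from rfl,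
            ← Finset.sum_mul, ha.2, one_mul]
      · rintro s ⟨P, hP, rfl⟩
        have := key a ha P hP
        linarith
    linarith
  have hWle : W C ε astar b ≤ dotp Ps C - ε * entropy Ps := by
    apply csInf_le
    · refine ⟨∑ i, f i * astar i - T, ?_⟩
      rintro s ⟨P, hP, rfl⟩
      have := key astar hamem P hP
      linarith
    · exact ⟨Ps, hPmem, rfl⟩
  refine le_antisymm (csSup_le (Set.nonempty_def.mpr hsetne) upper) ?_
  have hTle : T ≤ ∑ i, f i * astar i - W C ε astar b := by linarith [hval, hWle]
  exact le_trans hTle (le_csSup ⟨T, upper⟩ ⟨astar, hamem, rfl⟩)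

lemma proj_apply {n : ℕ} (p : Fin n) (v : EuclideanSpace ℝ (Fin n)) :
    EuclideanSpace.proj (𝕜 := ℝ) p v = v p := rfl

noncomputable def Du {n : ℕ} (ε : ℝ) (p : Fin n) (f : EuclideanSpace ℝ (Fin n)) :
    EuclideanSpace ℝ (Fin n) →L[ℝ] ℝ :=
  Real.exp (f p / ε) • (ε⁻¹ • (EuclideanSpace.proj p))

lemma hasU {n : ℕ} (ε : ℝ) (p : Fin n) (f : EuclideanSpace ℝ (Fin n)) :
    HasFDerivAt (fun y : EuclideanSpace ℝ (Fin n) => Real.exp (y p / ε)) (Du ε p f) f := by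
  have h0 : HasFDerivAt (fun y : EuclideanSpace ℝ (Fin n) => y p)
      (EuclideanSpace.proj (𝕜 := ℝ) p) f := (EuclideanSpace.proj (𝕜 := ℝ) p).hasFDerivAt
  have h1 := (h0.const_mul ε⁻¹).exp
  unfold Du
  simpa [div_eq_inv_mul] using h1

noncomputable def DZ {n m : ℕ} (C : Matrix (Fin n) (Fin m) ℝ) (ε : ℝ) (j : Fin m)
    (f : EuclideanSpace ℝ (Fin n)) : EuclideanSpace ℝ (Fin n) →L[ℝ] ℝ :=
  ∑ q, Real.exp (-C q j / ε) • Du ε q f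

lemma hasZ {n m : ℕ} (C : Matrix (Fin n) (Fin m) ℝ) (ε : ℝ) (j : Fin m)
    (f : EuclideanSpace ℝ (Fin n)) :
    HasFDerivAt (fun y => Zf C ε y j) (DZ C ε j f) f := by
  unfold Zf DZ
  exact HasFDerivAt.fun_sum fun q _ => (hasU ε q f).const_mul (Real.exp (-C q j / ε))

noncomputable def phi {n m : ℕ} (C : Matrix (Fin n) (Fin m) ℝ) (ε : ℝ) (b : Fin m → ℝ)
    (p : Fin n) (f : EuclideanSpace ℝ (Fin n)) : ℝ :=
  ∑ j, b j * Real.exp (-C p j / ε) * (Real.exp (f p / ε) * (Zf C ε f j)⁻¹)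

noncomputable def Dphi {n m : ℕ} (C : Matrix (Fin n) (Fin m) ℝ) (ε : ℝ) (b : Fin m → ℝ)
    (p : Fin n) (f : EuclideanSpace ℝ (Fin n)) : EuclideanSpace ℝ (Fin n) →L[ℝ] ℝ :=
  ∑ j, (b j * Real.exp (-C p j / ε)) •
    (Real.exp (f p / ε) • (-(Zf C ε f j ^ 2)⁻¹ • DZ C ε j f)
      + (Zf C ε f j)⁻¹ • Du ε p f)

lemma hasPhi {n m : ℕ} (hn : 0 < n) (C : Matrix (Fin n) (Fin m) ℝ) (ε : ℝ) (b : Fin m → ℝ)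
    (p : Fin n) (f : EuclideanSpace ℝ (Fin n)) :
    HasFDerivAt (phi C ε b p) (Dphi C ε b p f) f := by
  unfold phi Dphi
  refine HasFDerivAt.fun_sum fun j _ => ?_
  have hinv : HasFDerivAt (fun y => (Zf C ε y j)⁻¹)
      (-(Zf C ε f j ^ 2)⁻¹ • DZ C ε j f) f :=
    (hasDerivAt_inv (Zf_pos hn C ε f j).ne').comp_hasFDerivAt f (hasZ C ε j f)
  have h := ((hasU ε p f).mul hinv).const_mul (b j * Real.exp (-C p j / ε))
  exact h

noncomputable def gradMap {n m : ℕ} (C : Matrix (Fin n) (Fin m) ℝ) (ε : ℝ) (b : Fin m → ℝ)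
    (f : EuclideanSpace ℝ (Fin n)) : EuclideanSpace ℝ (Fin n) →L[ℝ] ℝ :=
  ∑ p, phi C ε b p f • EuclideanSpace.proj p

noncomputable def hess2 {n m : ℕ} (C : Matrix (Fin n) (Fin m) ℝ) (ε : ℝ) (b : Fin m → ℝ)
    (f : EuclideanSpace ℝ (Fin n)) :
    EuclideanSpace ℝ (Fin n) →L[ℝ] EuclideanSpace ℝ (Fin n) →L[ℝ] ℝ :=
  ∑ p, (Dphi C ε b p f).smulRight (EuclideanSpace.proj p)

lemma hasG {n m : ℕ} (hn : 0 < n) (C : Matrix (Fin n) (Fin m) ℝ) (ε : ℝ) (hε : 0 < ε)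
    (b : Fin m → ℝ) (f : EuclideanSpace ℝ (Fin n)) :
    HasFDerivAt
      (fun y : EuclideanSpace ℝ (Fin n) => ε * ((-∑ j, b j * (Real.log (b j) - 1)) +
        ∑ j, b j * Real.log (Zf C ε y j)))
      (gradMap C ε b f) f := by
  have hlog : ∀ j, HasFDerivAt (fun y => Real.log (Zf C ε y j))
      ((Zf C ε f j)⁻¹ • DZ C ε j f) f :=
    fun j => (hasZ C ε j f).log (Zf_pos hn C ε f j).ne'
  have h1 : HasFDerivAt (fun y : EuclideanSpace ℝ (Fin n) => ∑ j, b j * Real.log (Zf C ε y j))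
      (∑ j, b j • ((Zf C ε f j)⁻¹ • DZ C ε j f)) f :=
    HasFDerivAt.fun_sum fun j _ => (hlog j).const_mul (b j)
  have h2 := (h1.const_add (-∑ j, b j * (Real.log (b j) - 1))).const_mul ε
  refine h2.congr_fderiv (Eq.symm ?_)
  refine ContinuousLinearMap.ext fun v => ?_
  simp only [gradMap, Du, DZ, ContinuousLinearMap.sum_apply, ContinuousLinearMap.smul_apply,
    ContinuousLinearMap.coe_sum', Finset.sum_apply, proj_apply, smul_eq_mul]
  rw [Finset.mul_sum]
  rw [show (∑ p, phi C ε b p f * v p)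
      = ∑ p, ∑ j, b j * Real.exp (-C p j / ε) * (Real.exp (f p / ε) * (Zf C ε f j)⁻¹) * v p
      from Finset.sum_congr rfl fun p _ => by rw [phi, Finset.sum_mul]]
  rw [show (∑ p, ∑ j, b j * Real.exp (-C p j / ε) * (Real.exp (f p / ε) * (Zf C ε f j)⁻¹) * v p)
      = ∑ j, ∑ p, b j * Real.exp (-C p j / ε) * (Real.exp (f p / ε) * (Zf C ε f j)⁻¹) * v p
      from Finset.sum_comm]
  refine Finset.sum_congr rfl fun j _ => ?_
  rw [Finset.mul_sum, Finset.mul_sum, Finset.mul_sum]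
  refine Finset.sum_congr rfl fun p _ => ?_
  have hZ' := (Zf_pos hn C ε f j).ne'
  field_simp

lemma hasGrad {n m : ℕ} (hn : 0 < n) (C : Matrix (Fin n) (Fin m) ℝ) (ε : ℝ)
    (b : Fin m → ℝ) (f : EuclideanSpace ℝ (Fin n)) :
    HasFDerivAt (gradMap C ε b) (hess2 C ε b f) f := by
  unfold gradMap hess2
  refine HasFDerivAt.fun_sum fun p _ => ?_
  have h := (hasPhi hn C ε b p f).smul
    (hasFDerivAt_const (EuclideanSpace.proj (𝕜 := ℝ) p) f)
  rw [smul_zero, zero_add] at h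
  exact h

lemma Du_apply {n : ℕ} (ε : ℝ) (p : Fin n) (f v : EuclideanSpace ℝ (Fin n)) :
    Du ε p f v = Real.exp (f p / ε) * (ε⁻¹ * v p) := rfl

lemma single_collapse {n : ℕ} (g : Fin n → ℝ) (i0 : Fin n) :
    (∑ q, g q * (EuclideanSpace.single i0 (1:ℝ)) q) = g i0 := by
  rw [Finset.sum_congr rfl (fun q _ => by rw [EuclideanSpace.single_apply])]
  simp

lemma DZ_single {n m : ℕ} (C : Matrix (Fin n) (Fin m) ℝ) (ε : ℝ) (j : Fin m)
    (f : EuclideanSpace ℝ (Fin n)) (i : Fin n) :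
    DZ C ε j f (EuclideanSpace.single i 1)
      = Real.exp (-C i j / ε) * (Real.exp (f i / ε) * (ε⁻¹ * 1)) := by
  rw [DZ, ContinuousLinearMap.sum_apply]
  rw [show (∑ q, (Real.exp (-C q j / ε) • Du ε q f) (EuclideanSpace.single i 1))
      = ∑ q, (Real.exp (-C q j / ε) * (Real.exp (f q / ε) * ε⁻¹))
          * (EuclideanSpace.single i (1:ℝ)) q from
    Finset.sum_congr rfl fun q _ => by
      rw [ContinuousLinearMap.smul_apply, Du_apply, smul_eq_mul]; ring]
  rw [single_collapse]
  ring

lemma hess2_single {n m : ℕ} (C : Matrix (Fin n) (Fin m) ℝ) (ε : ℝ) (b : Fin m → ℝ)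
    (f : EuclideanSpace ℝ (Fin n)) (i i' : Fin n) :
    hess2 C ε b f (EuclideanSpace.single i 1) (EuclideanSpace.single i' 1)
      = Dphi C ε b i' f (EuclideanSpace.single i 1) := by
  rw [hess2, ContinuousLinearMap.sum_apply]
  rw [show ((∑ p, ((Dphi C ε b p f).smulRight (EuclideanSpace.proj p))
        (EuclideanSpace.single i 1)) (EuclideanSpace.single i' 1))
      = ∑ p, (Dphi C ε b p f (EuclideanSpace.single i 1))
          * (EuclideanSpace.single i' (1:ℝ)) p from by
    rw [ContinuousLinearMap.sum_apply]
    exact Finset.sum_congr rfl fun p _ => by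
      rw [ContinuousLinearMap.smulRight_apply, ContinuousLinearMap.smul_apply, proj_apply,
        smul_eq_mul]]
  rw [single_collapse]

lemma Dphi_single {n m : ℕ} (C : Matrix (Fin n) (Fin m) ℝ) (ε : ℝ) (b : Fin m → ℝ)
    (f : EuclideanSpace ℝ (Fin n)) (i i' : Fin n) :
    Dphi C ε b i' f (EuclideanSpace.single i 1)
      = ∑ j, (b j * Real.exp (-C i' j / ε)) *
          (Real.exp (f i' / ε) * (-(Zf C ε f j ^ 2)⁻¹ *
              (Real.exp (-C i j / ε) * (Real.exp (f i / ε) * (ε⁻¹ * 1))))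
            + (Zf C ε f j)⁻¹ *
              (Real.exp (f i' / ε) * (ε⁻¹ * (if i = i' then (1:ℝ) else 0)))) := by
  rw [Dphi, ContinuousLinearMap.sum_apply]
  refine Finset.sum_congr rfl fun j _ => ?_
  simp only [ContinuousLinearMap.smul_apply, ContinuousLinearMap.add_apply, Du_apply, DZ_single,
    smul_eq_mul, EuclideanSpace.single_apply]
  by_cases h : i = i' <;> simp [h, eq_comm] <;> ring

lemma hess2_eq_hessFstar {n m : ℕ} (hn : 0 < n) (C : Matrix (Fin n) (Fin m) ℝ) (ε : ℝ)
    (hε : 0 < ε) (b : Fin m → ℝ) (hb1 : ∀ j, 0 < b j)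
    (f : EuclideanSpace ℝ (Fin n)) (i i' : Fin n) :
    hess2 C ε b f (EuclideanSpace.single i 1) (EuclideanSpace.single i' 1)
      = hessFstar C ε b f i i' := by
  have hZ : ∀ j, 0 < Zf C ε f j := Zf_pos hn C ε f
  rw [hess2_single, Dphi_single]
  rw [show hessFstar C ε b f i i'
      = (if i = i' then
          (1/ε) * (Real.exp (f i / ε) * ∑ j, Real.exp (-C i j / ε) * (b j / Zf C ε f j))
         else 0)
        - (1/ε) * ∑ j,
            (Real.exp (f i / ε) * Real.exp (-C i j / ε) * (b j / Zf C ε f j)) *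
            (Real.exp (f i' / ε) * Real.exp (-C i' j / ε) * (b j / Zf C ε f j)) / b j
      from rfl]
  by_cases h : i = i'
  · subst h
    simp only [eq_self_iff_true, if_true, mul_one]
    rw [Finset.mul_sum, Finset.mul_sum, Finset.mul_sum, ← Finset.sum_sub_distrib]
    refine Finset.sum_congr rfl fun j _ => ?_
    have hZ' := (hZ j).ne'
    have hb' := (hb1 j).ne'
    field_simp
    ring
  · simp only [if_neg h, mul_zero, zero_sub]
    rw [Finset.mul_sum, ← Finset.sum_neg_distrib]
    refine Finset.sum_congr rfl fun j _ => ?_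
    have hZ' := (hZ j).ne'
    have hb' := (hb1 j).ne'
    field_simp
    ring

lemma hessFstar_entry {n m : ℕ} (C : Matrix (Fin n) (Fin m) ℝ) (ε : ℝ)
    (b : Fin m → ℝ) (f : EuclideanSpace ℝ (Fin n)) (i i' : Fin n) :
    hessFstar C ε b f i i'
      = (if i = i' then
          (1/ε) * (Real.exp (f i / ε) * ∑ j, Real.exp (-C i j / ε) * (b j / Zf C ε f j))
         else 0)
        - (1/ε) * ∑ j,
            (Real.exp (f i / ε) * Real.exp (-C i j / ε) * (b j / Zf C ε f j)) *
            (Real.exp (f i' / ε) * Real.exp (-C i' j / ε) * (b j / Zf C ε f j)) / b j := rfl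

lemma hessFstar_psd {n m : ℕ} (C : Matrix (Fin n) (Fin m) ℝ) (ε : ℝ) (hε : 0 < ε)
    (b : Fin m → ℝ) (hb1 : ∀ j, 0 < b j) (f : EuclideanSpace ℝ (Fin n)) :
    (hessFstar C ε b f).PosSemidef := by
  have hZnn : ∀ j, 0 ≤ Zf C ε f j := fun j =>
    Finset.sum_nonneg fun p _ => by positivity
  set t : Fin n → Fin m → ℝ := fun i j =>
    Real.exp (f i / ε) * Real.exp (-C i j / ε) * (b j / Zf C ε f j) with ht
  have htval : ∀ i j, t i j
      = Real.exp (f i / ε) * Real.exp (-C i j / ε) * (b j / Zf C ε f j) := fun _ _ => rfl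
  have htnn : ∀ i j, 0 ≤ t i j := fun i j => by
    rw [htval]
    exact mul_nonneg (mul_nonneg (Real.exp_pos _).le (Real.exp_pos _).le)
      (div_nonneg (hb1 j).le (hZnn j))
  have hM : ∀ i i', hessFstar C ε b f i i'
      = ((1/ε) * ∑ j, t i j) * (if i = i' then 1 else 0)
        - (1/ε) * ∑ j, t i j * t i' j / b j := by
    intro i i'
    rw [hessFstar_entry]
    congr 1
    by_cases h : i = i'
    · subst h
      rw [if_pos rfl, if_pos rfl, mul_one, Finset.mul_sum, Finset.mul_sum, Finset.mul_sum]
      refine Finset.sum_congr rfl fun j _ => ?_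
      rw [htval]; ring
    · rw [if_neg h, if_neg h, mul_zero]
  have hcolle : ∀ j, ∑ i, t i j ≤ b j := by
    intro j
    have : ∑ i, t i j = (∑ i, Real.exp (-C i j / ε) * Real.exp (f i / ε)) * (b j / Zf C ε f j) := by
      rw [Finset.sum_mul]
      exact Finset.sum_congr rfl fun i _ => by rw [htval]; ring
    rw [this, show (∑ i, Real.exp (-C i j / ε) * Real.exp (f i / ε)) = Zf C ε f j from rfl]
    rcases Nat.eq_zero_or_pos n with hn | hn
    · subst hn
      rw [show Zf C ε f j = 0 from by simp [Zf]]
      simpa using (hb1 j).le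
    · rw [mul_div_assoc', mul_comm, mul_div_assoc, div_self (Zf_pos hn C ε f j).ne', mul_one]
  rw [Matrix.posSemidef_iff_dotProduct_mulVec]
  constructor
  · -- Hermitian
    refine Matrix.IsHermitian.ext fun i i' => ?_
    rw [show star (hessFstar C ε b f i' i) = hessFstar C ε b f i' i from rfl, hM, hM]
    by_cases h : i = i'
    · subst h; rfl
    · rw [if_neg h, if_neg fun hc => h hc.symm, mul_zero, mul_zero]
      congr 2
      exact Finset.sum_congr rfl fun j _ => by ring
  · intro x
    have hstar : star x = x := rfl
    rw [hstar]
    have e1 : dotProduct x (Matrix.mulVec (hessFstar C ε b f) x)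
        = ∑ i, ∑ i', (x i * x i') * hessFstar C ε b f i i' := by
      rw [dotProduct]
      refine Finset.sum_congr rfl fun i _ => ?_
      rw [Matrix.mulVec, dotProduct, Finset.mul_sum]
      exact Finset.sum_congr rfl fun i' _ => by ring
    have e2 : ∑ i, ∑ i', (x i * x i') * hessFstar C ε b f i i'
        = (∑ i, (x i * x i) * ((1/ε) * ∑ j, t i j))
          - ∑ i, ∑ i', (x i * x i') * ((1/ε) * ∑ j, t i j * t i' j / b j) := by
      rw [← Finset.sum_sub_distrib]
      refine Finset.sum_congr rfl fun i _ => ?_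
      rw [show (∑ i', (x i * x i') * hessFstar C ε b f i i')
          = ∑ i', ((if i = i' then (x i * x i') * ((1/ε) * ∑ j, t i j) else 0)
              - (x i * x i') * ((1/ε) * ∑ j, t i j * t i' j / b j)) from
        Finset.sum_congr rfl fun i' _ => by
          rw [hM]
          by_cases h : i = i' <;> simp [h] <;> ring]
      rw [Finset.sum_sub_distrib, Finset.sum_ite_eq]
      simp
    have e3 : ∑ i, ∑ i', (x i * x i') * ((1/ε) * ∑ j, t i j * t i' j / b j)
        = (1/ε) * ∑ j, (∑ i, x i * t i j) * (∑ i, x i * t i j) / b j := by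
      rw [Finset.mul_sum]
      rw [show (∑ i, ∑ i', (x i * x i') * ((1/ε) * ∑ j, t i j * t i' j / b j))
          = ∑ i, ∑ i', ∑ j, (1/ε) * ((x i * t i j) * (x i' * t i' j) / b j) from
        Finset.sum_congr rfl fun i _ => Finset.sum_congr rfl fun i' _ => by
          rw [Finset.mul_sum, Finset.mul_sum]
          exact Finset.sum_congr rfl fun j _ => by ring]
      rw [show (∑ i, ∑ i', ∑ j, (1/ε) * ((x i * t i j) * (x i' * t i' j) / b j))
          = ∑ j, ∑ i, ∑ i', (1/ε) * ((x i * t i j) * (x i' * t i' j) / b j) from by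
        rw [Finset.sum_congr rfl fun i (_ : i ∈ Finset.univ) =>
          (Finset.sum_comm :
            (∑ i', ∑ j, (1/ε) * ((x i * t i j) * (x i' * t i' j) / b j))
            = ∑ j, ∑ i', (1/ε) * ((x i * t i j) * (x i' * t i' j) / b j))]
        exact Finset.sum_comm]
      refine Finset.sum_congr rfl fun j _ => ?_
      rw [Finset.sum_mul_sum, Finset.sum_div, Finset.mul_sum]
      refine Finset.sum_congr rfl fun i _ => ?_
      rw [Finset.sum_div, Finset.mul_sum]
    have key : ∀ j, (∑ i, x i * t i j) * (∑ i, x i * t i j) / b j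
        ≤ ∑ i, (x i * x i) * t i j := by
      intro j
      have cs := Finset.sum_mul_sq_le_sq_mul_sq Finset.univ
        (fun i => Real.sqrt (t i j)) (fun i => x i * Real.sqrt (t i j))
      have h1 : (∑ i, Real.sqrt (t i j) * (x i * Real.sqrt (t i j))) = ∑ i, x i * t i j :=
        Finset.sum_congr rfl fun i _ => by
          rw [show Real.sqrt (t i j) * (x i * Real.sqrt (t i j))
              = x i * (Real.sqrt (t i j) * Real.sqrt (t i j)) from by ring,
            Real.mul_self_sqrt (htnn i j)]
      have h2 : (∑ i, Real.sqrt (t i j) ^ 2) = ∑ i, t i j :=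
        Finset.sum_congr rfl fun i _ => Real.sq_sqrt (htnn i j)
      have h3 : (∑ i, (x i * Real.sqrt (t i j)) ^ 2) = ∑ i, (x i * x i) * t i j :=
        Finset.sum_congr rfl fun i _ => by
          rw [mul_pow, Real.sq_sqrt (htnn i j)]; ring
      rw [h1, h2, h3] at cs
      have h4 : 0 ≤ ∑ i, (x i * x i) * t i j :=
        Finset.sum_nonneg fun i _ => mul_nonneg (mul_self_nonneg _) (htnn i j)
      have h5 : (∑ i, x i * t i j) ^ 2 ≤ b j * ∑ i, (x i * x i) * t i j :=
        le_trans cs (mul_le_mul_of_nonneg_right (hcolle j) h4)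
      rw [div_le_iff₀ (hb1 j), ← sq]
      calc (∑ i, x i * t i j) ^ 2 ≤ b j * ∑ i, (x i * x i) * t i j := h5
        _ = (∑ i, (x i * x i) * t i j) * b j := mul_comm _ _
    have e4 : (∑ i, (x i * x i) * ((1/ε) * ∑ j, t i j))
        = (1/ε) * ∑ j, ∑ i, (x i * x i) * t i j := by
      rw [Finset.mul_sum]
      rw [show (∑ i, (x i * x i) * ((1/ε) * ∑ j, t i j))
          = ∑ i, ∑ j, (1/ε) * ((x i * x i) * t i j) from
        Finset.sum_congr rfl fun i _ => by
          rw [Finset.mul_sum, Finset.mul_sum]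
          exact Finset.sum_congr rfl fun j _ => by ring]
      rw [Finset.sum_comm]
      exact Finset.sum_congr rfl fun j _ => by rw [Finset.mul_sum]
    rw [e1, e2, e3, e4]
    rw [sub_nonneg]
    refine mul_le_mul_of_nonneg_left ?_ (by positivity)
    exact Finset.sum_le_sum fun j _ => key j

end Stmt19Aux

theorem stmt19 {n m : ℕ} (b : Fin m → ℝ)
    (hb : (∀ j, 0 < b j) ∧ ∑ j, b j = 1)
    (C : Matrix (Fin n) (Fin m) ℝ) (ε : ℝ) (hε : 0 < ε)
    (f : EuclideanSpace ℝ (Fin n)) :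
    (∀ i i', iteratedFDeriv ℝ 2 (Fstar C ε b) f
        ![EuclideanSpace.single i 1, EuclideanSpace.single i' 1] = hessFstar C ε b f i i')
    ∧ (hessFstar C ε b f).PosSemidef := by
  constructor
  · intro i i'
    have hn : 0 < n := i.pos
    have hfun : Fstar C ε b = fun y => ε * ((-∑ j, b j * (Real.log (b j) - 1)) +
        ∑ j, b j * Real.log (Stmt19Aux.Zf C ε y j)) :=
      funext fun y => Stmt19Aux.Fstar_eq hn b hb C ε hε y
    rw [iteratedFDeriv_two_apply]
    have hf1 : fderiv ℝ (Fstar C ε b) = Stmt19Aux.gradMap C ε b := by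
      funext y
      rw [hfun]
      exact (Stmt19Aux.hasG hn C ε hε b y).fderiv
    rw [hf1]
    rw [show fderiv ℝ (Stmt19Aux.gradMap C ε b) f = Stmt19Aux.hess2 C ε b f from
      (Stmt19Aux.hasGrad hn C ε b f).fderiv]
    rw [show (![EuclideanSpace.single i 1, EuclideanSpace.single i' 1] :
          Fin 2 → EuclideanSpace ℝ (Fin n)) 0 = EuclideanSpace.single i 1 from rfl,
        show (![EuclideanSpace.single i 1, EuclideanSpace.single i' 1] :
          Fin 2 → EuclideanSpace ℝ (Fin n)) 1 = EuclideanSpace.single i' 1 from rfl]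
    exact Stmt19Aux.hess2_eq_hessFstar hn C ε hε b hb.1 f i i'
  · exact Stmt19Aux.hessFstar_psd C ε hε b hb.1 f
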